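/- If random variables Y and Y* on the same probability space satisfy |Y* - Y| ≤ c almost surely, and 0 ≤ s < 2/c, then E[e^{sY*}] ≤ ((1+cs/2)/(1-cs/2))·E[e^{sY}], provided E[e^{sY}] < ∞. -/

import Mathlib

open MeasureTheory

lemma sinh_le_mul_cosh : ∀ x : ℝ, 0 ≤ x → Real.sinh x ≤ x * Real.cosh x := by
  intro x hx
  have hmono : MonotoneOn (fun u : ℝ => u * Real.cosh u - Real.sinh u) (Set.Ici 0) := by
    apply monotoneOn_of_deriv_nonneg (convex_Ici 0)
    · exact ((continuous_id.mul Real.continuous_cosh).sub Real.continuous_sinh).continuousOn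
    · intro u _
      exact ((differentiable_id.mul Real.differentiable_cosh).sub
        Real.differentiable_sinh).differentiableAt.differentiableWithinAt
    · intro u hu
      have : deriv (fun u : ℝ => u * Real.cosh u - Real.sinh u) u = u * Real.sinh u := by
        have h1 : HasDerivAt (fun u : ℝ => u * Real.cosh u - Real.sinh u)
            (1 * Real.cosh u + u * Real.sinh u - Real.cosh u) u :=
          ((hasDerivAt_id u).mul (Real.hasDerivAt_cosh u)).sub (Real.hasDerivAt_sinh u)
        rw [h1.deriv]; ring
      rw [this]
      have hu' : 0 ≤ u := le_of_lt (by simpa using hu)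
      have : 0 ≤ Real.sinh u := by
        rw [Real.sinh_eq]
        have := Real.exp_le_exp.mpr (by linarith : -u ≤ u)
        linarith
      exact mul_nonneg hu' this
  have := hmono (Set.self_mem_Ici) (Set.mem_Ici.mpr hx) hx
  simp only [Real.sinh_zero, Real.cosh_zero, zero_mul, sub_zero] at this
  linarith

lemma exp_sub_exp_le (x y : ℝ) :
    Real.exp y - Real.exp x ≤ |y - x| * (Real.exp x + Real.exp y) / 2 := by
  rcases le_total x y with h | h
  · rw [abs_of_nonneg (by linarith)]
    set m := (x + y) / 2
    set u := (y - x) / 2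
    have hu : 0 ≤ u := by simp only [u]; linarith
    have hx' : Real.exp x = Real.exp m * Real.exp (-u) := by
      rw [← Real.exp_add]; simp only [m, u]; ring_nf
    have hy' : Real.exp y = Real.exp m * Real.exp u := by
      rw [← Real.exp_add]; simp only [m, u]; ring_nf
    have key := sinh_le_mul_cosh u hu
    rw [Real.sinh_eq, Real.cosh_eq] at key
    have hm : 0 < Real.exp m := Real.exp_pos m
    have huv : y - x = 2 * u := by simp only [u]; ring
    rw [hx', hy', huv]
    nlinarith [Real.exp_pos u, Real.exp_pos (-u)]
  · have h1 : Real.exp y ≤ Real.exp x := Real.exp_le_exp.mpr h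
    have h2 : 0 ≤ |y - x| * (Real.exp x + Real.exp y) / 2 := by
      positivity
    linarith

/-- mgf comparison under a two-sided bounded coupling. -/
theorem mgf_comparison_abs
    {Ω : Type*} [MeasurableSpace Ω] (μ : Measure Ω) [IsProbabilityMeasure μ]
    (Y Ystar : Ω → ℝ) (c s : ℝ)
    (hY : Measurable Y) (hYstar : Measurable Ystar) (hc : 0 < c)
    (hbd : ∀ᵐ ω ∂μ, |Ystar ω - Y ω| ≤ c)
    (hs0 : 0 ≤ s) (hs : s < 2 / c)
    (hint : Integrable (fun ω => Real.exp (s * Y ω)) μ) :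
    ∫ ω, Real.exp (s * Ystar ω) ∂μ
      ≤ (1 + c * s / 2) / (1 - c * s / 2) * ∫ ω, Real.exp (s * Y ω) ∂μ := by
  set R : ℝ := (1 + c * s / 2) / (1 - c * s / 2) with hR
  have hcs : c * s < 2 := by
    have := (lt_div_iff₀ hc).mp hs
    linarith
  have hden : 0 < 1 - c * s / 2 := by linarith
  have hnum : 0 < 1 + c * s / 2 := by nlinarith
  have hRpos : 0 < R := div_pos hnum hden
  -- pointwise bound
  have hpt : ∀ᵐ ω ∂μ, Real.exp (s * Ystar ω) ≤ R * Real.exp (s * Y ω) := by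
    filter_upwards [hbd] with ω hω
    have key := exp_sub_exp_le (s * Y ω) (s * Ystar ω)
    have habs : |s * Ystar ω - s * Y ω| ≤ c * s := by
      have : |s * Ystar ω - s * Y ω| = s * |Ystar ω - Y ω| := by
        rw [← mul_sub, abs_mul, abs_of_nonneg hs0]
      rw [this]
      calc s * |Ystar ω - Y ω| ≤ s * c := by
            exact mul_le_mul_of_nonneg_left hω hs0
        _ = c * s := mul_comm s c
    have hEx : 0 < Real.exp (s * Y ω) := Real.exp_pos _
    have hEy : 0 < Real.exp (s * Ystar ω) := Real.exp_pos _
    have h2 : Real.exp (s * Ystar ω) - Real.exp (s * Y ω) ≤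
        c * s * (Real.exp (s * Y ω) + Real.exp (s * Ystar ω)) / 2 := by
      calc Real.exp (s * Ystar ω) - Real.exp (s * Y ω)
          ≤ |s * Ystar ω - s * Y ω| * (Real.exp (s * Y ω) + Real.exp (s * Ystar ω)) / 2 := key
        _ ≤ c * s * (Real.exp (s * Y ω) + Real.exp (s * Ystar ω)) / 2 := by
            apply div_le_div_of_nonneg_right ?_ (by norm_num)
            exact mul_le_mul_of_nonneg_right habs (by positivity)
    have h3 : (1 - c * s / 2) * Real.exp (s * Ystar ω)
        ≤ (1 + c * s / 2) * Real.exp (s * Y ω) := by nlinarith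
    rw [hR, div_mul_eq_mul_div, le_div_iff₀ hden]
    nlinarith
  -- integrability of exp (s * Ystar)
  have hintStar : Integrable (fun ω => Real.exp (s * Ystar ω)) μ := by
    apply Integrable.mono' (hint.const_mul R)
      ((hYstar.const_mul s).exp.aestronglyMeasurable)
    filter_upwards [hpt] with ω hω
    rwa [Real.norm_eq_abs, abs_of_pos (Real.exp_pos _)]
  calc ∫ ω, Real.exp (s * Ystar ω) ∂μ
      ≤ ∫ ω, R * Real.exp (s * Y ω) ∂μ :=
        integral_mono_ae hintStar (hint.const_mul R) hpt
    _ = R * ∫ ω, Real.exp (s * Y ω) ∂μ := integral_const_mul R _
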